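/- Assume H is as in the rescaled bicharacteristic system, and let (x, y, λ, μ, ξ) be a C¹ solution of the system on an interval I. Then for all t ∈ I, d/dt ⟨H(x(t),y(t))·μ(t), μ(t)⟩ = 2·(1 + 2λ(t))·⟨H(x(t),y(t))·μ(t), μ(t)⟩ + x(t)·λ(t)·⟨∂ₓH(x(t),y(t))·μ(t), μ(t)⟩; in particular all terms involving the y-derivatives of H cancel. -/

import Mathlib

open Filter Set

noncomputable section

/-- Apply a matrix `A : Fin d → Fin d → ℝ` to a vector. -/
def appF {d : ℕ} (A : Fin d → Fin d → ℝ) (v : Fin d → ℝ) : Fin d → ℝ :=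
  fun i => ∑ j, A i j * v j

/-- Euclidean dot product on `Fin d → ℝ`. -/
def dotF {d : ℕ} (v w : Fin d → ℝ) : ℝ := ∑ i, v i * w i

/-- The partial derivative `∂ₓH`. -/
def Hx' {d : ℕ} (H : ℝ → (Fin d → ℝ) → (Fin d → Fin d → ℝ)) (x : ℝ) (y : Fin d → ℝ) :
    Fin d → Fin d → ℝ :=
  fderiv ℝ (fun p : ℝ × (Fin d → ℝ) => H p.1 p.2) (x, y) (1, 0)

/-- The partial derivative `∂_{yᵢ}H`. -/
def Hy' {d : ℕ} (H : ℝ → (Fin d → ℝ) → (Fin d → Fin d → ℝ)) (i : Fin d) (x : ℝ)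
    (y : Fin d → ℝ) : Fin d → Fin d → ℝ :=
  fderiv ℝ (fun p : ℝ × (Fin d → ℝ) => H p.1 p.2) (x, y) (0, Pi.single i 1)

/-- `(x, y, λ, μ, ξ)` is a solution of the rescaled bicharacteristic system for `H`
on the set `I`:  `x' = λx`, `y' = Hμ`, `λ' = λ + λ² − ⟨Hμ,μ⟩ − (x/2)⟨∂ₓH μ,μ⟩`,
`μᵢ' = (1+2λ)μᵢ − (1/2)⟨∂_{yᵢ}H μ,μ⟩`, `ξ' = (1+2λ)ξ`. -/
def IsBicharSol {d m : ℕ} (H : ℝ → (Fin d → ℝ) → (Fin d → Fin d → ℝ))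
    (x lam : ℝ → ℝ) (y μ : ℝ → Fin d → ℝ) (ξ : ℝ → Fin m → ℝ) (I : Set ℝ) : Prop :=
  ∀ t ∈ I,
    HasDerivAt x (lam t * x t) t ∧
    HasDerivAt y (appF (H (x t) (y t)) (μ t)) t ∧
    HasDerivAt lam (lam t + (lam t) ^ 2 - dotF (appF (H (x t) (y t)) (μ t)) (μ t)
      - x t / 2 * dotF (appF (Hx' H (x t) (y t)) (μ t)) (μ t)) t ∧
    (∀ i, HasDerivAt (fun s => μ s i)
      ((1 + 2 * lam t) * μ t i
        - 1 / 2 * dotF (appF (Hy' H i (x t) (y t)) (μ t)) (μ t)) t) ∧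
    HasDerivAt ξ ((1 + 2 * lam t) • ξ t) t

end

section Aux

/-- `⟨Av, v⟩` as a double sum. -/
lemma dotF_appF_eq {d : ℕ} (A : Fin d → Fin d → ℝ) (v : Fin d → ℝ) :
    dotF (appF A v) v = ∑ i, ∑ j, A i j * v j * v i := by
  simp [dotF, appF, Finset.sum_mul]

/-- The key algebraic identity:  the `y`-derivative (`Cm`) terms cancel. -/
lemma alg_identity {d : ℕ} (A B : Fin d → Fin d → ℝ) (Cm : Fin d → Fin d → Fin d → ℝ)
    (v : Fin d → ℝ) (a X : ℝ) (hA : ∀ i j, A i j = A j i) :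
    ∑ i, ∑ j, ((a * X * B i j + ∑ k, appF A v k * Cm k i j) * v j * v i
      + A i j * ((1 + 2 * a) * v j - 1 / 2 * dotF (appF (Cm j) v) v) * v i
      + A i j * v j * ((1 + 2 * a) * v i - 1 / 2 * dotF (appF (Cm i) v) v))
    = 2 * (1 + 2 * a) * dotF (appF A v) v + X * a * dotF (appF B v) v := by
  have hwj : ∀ j, appF A v j = ∑ i, A i j * v i := by
    intro j
    exact Finset.sum_congr rfl fun i _ => by rw [hA j i]
  have expand : ∀ i j,
      (a * X * B i j + ∑ k, appF A v k * Cm k i j) * v j * v i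
        + A i j * ((1 + 2 * a) * v j - 1 / 2 * dotF (appF (Cm j) v) v) * v i
        + A i j * v j * ((1 + 2 * a) * v i - 1 / 2 * dotF (appF (Cm i) v) v)
      = a * X * (B i j * v j * v i) + (∑ k, appF A v k * (Cm k i j * v j * v i))
        + 2 * (1 + 2 * a) * (A i j * v j * v i)
        - 1 / 2 * ((A i j * v i) * dotF (appF (Cm j) v) v)
        - 1 / 2 * ((A i j * v j) * dotF (appF (Cm i) v) v) := by
    intro i j
    rw [show (∑ k, appF A v k * (Cm k i j * v j * v i))
        = (∑ k, appF A v k * Cm k i j) * v j * v i by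
      rw [Finset.sum_mul, Finset.sum_mul]
      exact Finset.sum_congr rfl fun k _ => by ring]
    ring
  rw [Finset.sum_congr rfl fun i _ => Finset.sum_congr rfl fun j _ => expand i j]
  simp only [Finset.sum_add_distrib, Finset.sum_sub_distrib]
  have hT1 : ∑ i, ∑ j, a * X * (B i j * v j * v i) = X * a * dotF (appF B v) v := by
    rw [dotF_appF_eq]
    simp only [← Finset.mul_sum]
    ring
  have hT2 : ∑ i, ∑ j, (∑ k, appF A v k * (Cm k i j * v j * v i))
      = ∑ k, appF A v k * dotF (appF (Cm k) v) v := by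
    rw [Finset.sum_congr rfl fun i (_ : i ∈ Finset.univ) => Finset.sum_comm,
      Finset.sum_comm]
    refine Finset.sum_congr rfl fun k _ => ?_
    rw [dotF_appF_eq]
    simp only [← Finset.mul_sum]
  have hT3 : ∑ i, ∑ j, 2 * (1 + 2 * a) * (A i j * v j * v i)
      = 2 * (1 + 2 * a) * dotF (appF A v) v := by
    rw [dotF_appF_eq]
    simp only [← Finset.mul_sum]
  have hT4 : ∑ i, ∑ j, 1 / 2 * ((A i j * v i) * dotF (appF (Cm j) v) v)
      = ∑ j, 1 / 2 * (appF A v j * dotF (appF (Cm j) v) v) := by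
    rw [Finset.sum_comm]
    refine Finset.sum_congr rfl fun j _ => ?_
    rw [hwj j, Finset.sum_mul, ← Finset.mul_sum]
  have hT5 : ∑ i, ∑ j, 1 / 2 * ((A i j * v j) * dotF (appF (Cm i) v) v)
      = ∑ i, 1 / 2 * (appF A v i * dotF (appF (Cm i) v) v) := by
    refine Finset.sum_congr rfl fun i _ => ?_
    rw [show appF A v i = ∑ j, A i j * v j from rfl, Finset.sum_mul, ← Finset.mul_sum]
  rw [hT1, hT2, hT3, hT4, hT5]
  have hcancel : ∑ k, appF A v k * dotF (appF (Cm k) v) v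
      - ∑ j, 1 / 2 * (appF A v j * dotF (appF (Cm j) v) v)
      - ∑ i, 1 / 2 * (appF A v i * dotF (appF (Cm i) v) v) = 0 := by
    rw [← Finset.sum_sub_distrib, ← Finset.sum_sub_distrib]
    exact Finset.sum_eq_zero fun k _ => by ring
  linarith [hcancel]

/-- The analytic core of the theorem, with clean variable names. -/
lemma main_aux {d : ℕ} (H : ℝ → (Fin d → ℝ) → (Fin d → Fin d → ℝ))
    (hH : ContDiff ℝ 1 (fun p : ℝ × (Fin d → ℝ) => H p.1 p.2))
    (hsymm : ∀ x y, ∀ i j, H x y i j = H x y j i)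
    (x lam : ℝ → ℝ) (y μ : ℝ → Fin d → ℝ) (t : ℝ)
    (hx : HasDerivAt x (lam t * x t) t)
    (hy : HasDerivAt y (appF (H (x t) (y t)) (μ t)) t)
    (hmu : ∀ i, HasDerivAt (fun s => μ s i)
      ((1 + 2 * lam t) * μ t i
        - 1 / 2 * dotF (appF (Hy' H i (x t) (y t)) (μ t)) (μ t)) t) :
    HasDerivAt (fun s => dotF (appF (H (x s) (y s)) (μ s)) (μ s))
      (2 * (1 + 2 * lam t) * dotF (appF (H (x t) (y t)) (μ t)) (μ t)
        + x t * lam t * dotF (appF (Hx' H (x t) (y t)) (μ t)) (μ t)) t := by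
  have hFdiff : DifferentiableAt ℝ (fun p : ℝ × (Fin d → ℝ) => H p.1 p.2) (x t, y t) :=
    (hH.differentiable one_ne_zero).differentiableAt
  have hFd : HasFDerivAt (fun p : ℝ × (Fin d → ℝ) => H p.1 p.2)
      (fderiv ℝ (fun p : ℝ × (Fin d → ℝ) => H p.1 p.2) (x t, y t)) (x t, y t) :=
    hFdiff.hasFDerivAt
  have hcurve : HasDerivAt (fun s => ((x s, y s) : ℝ × (Fin d → ℝ)))
      (lam t * x t, appF (H (x t) (y t)) (μ t)) t := hx.prodMk hy
  have hHt : HasDerivAt (fun s => H (x s) (y s))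
      (fderiv ℝ (fun p : ℝ × (Fin d → ℝ) => H p.1 p.2) (x t, y t)
        (lam t * x t, appF (H (x t) (y t)) (μ t))) t :=
    by have := hFd.comp_hasDerivAt t hcurve; exact this
  -- decompose the directional derivative into x- and y-partials
  have hdir : fderiv ℝ (fun p : ℝ × (Fin d → ℝ) => H p.1 p.2) (x t, y t)
      (lam t * x t, appF (H (x t) (y t)) (μ t))
      = (lam t * x t) • Hx' H (x t) (y t)
        + ∑ k, appF (H (x t) (y t)) (μ t) k • Hy' H k (x t) (y t) := by
    have hdecomp : ((lam t * x t, appF (H (x t) (y t)) (μ t)) : ℝ × (Fin d → ℝ))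
        = (lam t * x t) • (((1 : ℝ), (0 : Fin d → ℝ)) : ℝ × (Fin d → ℝ))
          + ∑ k, appF (H (x t) (y t)) (μ t) k
              • (((0 : ℝ), (Pi.single k 1 : Fin d → ℝ)) : ℝ × (Fin d → ℝ)) := by
      refine Prod.ext ?_ ?_
      · simp [Prod.fst_sum]
      · funext j
        simp [Prod.snd_sum, Finset.sum_apply, Pi.single_apply, mul_ite]
    rw [hdecomp, map_add, map_smul, map_sum]
    simp only [Hx', Hy', map_smul]
  rw [hdir] at hHt
  have hHij : ∀ i j, HasDerivAt (fun s => H (x s) (y s) i j)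
      (((lam t * x t) • Hx' H (x t) (y t)
        + ∑ k, appF (H (x t) (y t)) (μ t) k • Hy' H k (x t) (y t)) i j) t := by
    intro i j
    exact (hasDerivAt_pi.mp ((hasDerivAt_pi.mp hHt) i)) j
  -- product rule for the double sum
  have hq : HasDerivAt (fun s => ∑ i, ∑ j, H (x s) (y s) i j * μ s j * μ s i)
      (∑ i, ∑ j, ((((lam t * x t) • Hx' H (x t) (y t)
          + ∑ k, appF (H (x t) (y t)) (μ t) k • Hy' H k (x t) (y t)) i j) * μ t j * μ t i
        + H (x t) (y t) i j * ((1 + 2 * lam t) * μ t j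
            - 1 / 2 * dotF (appF (Hy' H j (x t) (y t)) (μ t)) (μ t)) * μ t i
        + H (x t) (y t) i j * μ t j * ((1 + 2 * lam t) * μ t i
            - 1 / 2 * dotF (appF (Hy' H i (x t) (y t)) (μ t)) (μ t)))) t := by
    refine HasDerivAt.fun_sum fun i _ => HasDerivAt.fun_sum fun j _ => ?_
    have h1 := ((hHij i j).fun_mul (hmu j)).fun_mul (hmu i)
    refine h1.congr_deriv ?_
    ring
  have hqval : ∑ i, ∑ j, ((((lam t * x t) • Hx' H (x t) (y t)
          + ∑ k, appF (H (x t) (y t)) (μ t) k • Hy' H k (x t) (y t)) i j) * μ t j * μ t i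
        + H (x t) (y t) i j * ((1 + 2 * lam t) * μ t j
            - 1 / 2 * dotF (appF (Hy' H j (x t) (y t)) (μ t)) (μ t)) * μ t i
        + H (x t) (y t) i j * μ t j * ((1 + 2 * lam t) * μ t i
            - 1 / 2 * dotF (appF (Hy' H i (x t) (y t)) (μ t)) (μ t)))
      = 2 * (1 + 2 * lam t) * dotF (appF (H (x t) (y t)) (μ t)) (μ t)
          + x t * lam t * dotF (appF (Hx' H (x t) (y t)) (μ t)) (μ t) := by
    have halg := alg_identity (H (x t) (y t)) (Hx' H (x t) (y t))
      (fun k => Hy' H k (x t) (y t)) (μ t) (lam t) (x t) (hsymm (x t) (y t))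
    rw [← halg]
    refine Finset.sum_congr rfl fun i _ => Finset.sum_congr rfl fun j _ => ?_
    congr 2
    simp only [Pi.add_apply, Pi.smul_apply, Finset.sum_apply, smul_eq_mul]
  rw [hqval] at hq
  convert hq using 2
  exact dotF_appF_eq _ _

end Aux

/-- Evolution of the squared angular momentum `q(t) = ⟨H(x,y)μ, μ⟩` along a solution of
the rescaled bicharacteristic system: `q' = 2(1+2λ)q + xλ·⟨∂ₓH μ, μ⟩`; in particular
all terms involving the `y`-derivatives of `H` cancel. -/
theorem stmt8 (n m : ℕ) (hn : 2 ≤ n) (hm : 1 ≤ m)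
    (H : ℝ → (Fin (n - 1) → ℝ) → (Fin (n - 1) → Fin (n - 1) → ℝ))
    (hH : ContDiff ℝ 1 (fun p : ℝ × (Fin (n - 1) → ℝ) => H p.1 p.2))
    (hsymm : ∀ x y, ∀ i j, H x y i j = H x y j i)
    (x lam : ℝ → ℝ) (y μ : ℝ → Fin (n - 1) → ℝ) (ξ : ℝ → Fin m → ℝ)
    (I : Set ℝ) (hsol : IsBicharSol H x lam y μ ξ I) :
    ∀ t ∈ I,
      HasDerivAt (fun s => dotF (appF (H (x s) (y s)) (μ s)) (μ s))
        (2 * (1 + 2 * lam t) * dotF (appF (H (x t) (y t)) (μ t)) (μ t)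
          + x t * lam t * dotF (appF (Hx' H (x t) (y t)) (μ t)) (μ t)) t := by
  intro t ht
  obtain ⟨hx, hy, _, hmu, _⟩ := hsol t ht
  exact main_aux H hH hsymm x lam y μ t hx hy hmu
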